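/- arXiv:2512.00452 — 3 statements merged into one kernel-verified Lean document; each statement's English description precedes it below -/
import Mathlib

section
/- In the ring ℚ[[u]] of formal power series over ℚ, the series t := Σ_{n=0}^∞ 2·C(1/3,n)·u^n·T_n(−u/2) is well defined (the n-th summand 2·C(1/3,n)·u^n·T_n(−u/2) is a polynomial in u of order at least n, so the sum converges coefficientwise), has constant coefficient 2, and satisfies t³ − 3t = 2 − u² in ℚ[[u]]. Here T_n ∈ ℤ[X] is the n-th Chebyshev polynomial of the first kind and C(1/3,n) := (1/3)(1/3−1)⋯(1/3−n+1)/n! ∈ ℚ. -/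
/-- The rational binomial coefficient `C(γ, n) = γ(γ-1)⋯(γ-n+1)/n!`. -/
noncomputable def ratChoose (γ : ℚ) (n : ℕ) : ℚ :=
  (descPochhammer ℚ n).eval γ / (n.factorial : ℚ)

/-- The `n`-th summand `2·C(1/3,n)·u^n·T_n(-u/2)` as a polynomial in `u` over `ℚ`. -/
noncomputable def chebSummand (n : ℕ) : Polynomial ℚ :=
  Polynomial.C (2 * ratChoose (1 / 3) n) *
    (Polynomial.X ^ n *
      (Polynomial.Chebyshev.T ℚ (n : ℤ)).comp (Polynomial.C (-(1 : ℚ) / 2) * Polynomial.X))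

namespace ChebAux

open Finset

abbrev A : Type := PowerSeries ℚ

noncomputable def u : A := PowerSeries.X

/-! ### Summation of coefficientwise-finite families of power series -/

noncomputable def ps (f : ℕ → A) : A :=
  PowerSeries.mk fun k => ∑ n ∈ Finset.range (k + 1), PowerSeries.coeff k (f n)

/-- order of `p` is at least `n`. -/
def OG (p : A) (n : ℕ) : Prop := ∀ k, k < n → PowerSeries.coeff k p = 0

def Ord (f : ℕ → A) : Prop := ∀ n, OG (f n) n

lemma OG_X_pow_mul (p : A) (n : ℕ) : OG (PowerSeries.X ^ n * p) n := by
  intro k hk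
  have : (PowerSeries.X : A) ^ n ∣ PowerSeries.X ^ n * p := Dvd.intro p rfl
  exact (PowerSeries.X_pow_dvd_iff.mp this) k hk

lemma coeff_ps (f : ℕ → A) (k : ℕ) :
    PowerSeries.coeff k (ps f) = ∑ n ∈ Finset.range (k + 1), PowerSeries.coeff k (f n) := by
  simp [ps]

lemma coeff_ps_ext {f : ℕ → A} (hf : Ord f) (k M : ℕ) (hM : k < M) :
    PowerSeries.coeff k (ps f) = ∑ n ∈ Finset.range M, PowerSeries.coeff k (f n) := by
  rw [coeff_ps]
  refine Finset.sum_subset (Finset.range_subset_range.mpr (by omega)) fun n _ hn => ?_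
  rw [Finset.mem_range, not_lt] at hn
  exact hf n k (by omega)

lemma ps_add (f g : ℕ → A) : ps (fun n => f n + g n) = ps f + ps g := by
  ext k
  simp [coeff_ps, Finset.sum_add_distrib]

lemma ps_sub (f g : ℕ → A) : ps (fun n => f n - g n) = ps f - ps g := by
  ext k
  simp [coeff_ps, Finset.sum_sub_distrib]

lemma ps_congr {f g : ℕ → A} (h : ∀ n, f n = g n) : ps f = ps g := by
  ext k; simp [coeff_ps, h]

lemma ps_zero : ps (fun _ => (0 : A)) = 0 := by
  ext k; simp [coeff_ps]

lemma ps_const_mul {f : ℕ → A} (hf : Ord f) (a : A) :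
    a * ps f = ps (fun n => a * f n) := by
  ext k
  rw [PowerSeries.coeff_mul, coeff_ps]
  have : ∀ n ∈ Finset.range (k+1), PowerSeries.coeff k (a * f n)
      = ∑ ij ∈ Finset.HasAntidiagonal.antidiagonal k,
          PowerSeries.coeff ij.1 a * PowerSeries.coeff ij.2 (f n) := by
    intro n _
    rw [PowerSeries.coeff_mul]
  rw [Finset.sum_congr rfl this, Finset.sum_comm]
  refine Finset.sum_congr rfl fun ij hij => ?_
  rw [Finset.HasAntidiagonal.mem_antidiagonal] at hij
  rw [coeff_ps, ← Finset.mul_sum]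
  congr 1
  have hsub : Finset.range (ij.2+1) ⊆ Finset.range (k+1) := Finset.range_subset_range.mpr (by omega)
  refine (Finset.sum_subset hsub (f := fun n => PowerSeries.coeff ij.2 (f n))
    fun n hn hn2 => ?_)
  rw [Finset.mem_range, not_lt] at hn2
  exact hf n ij.2 (by omega)

noncomputable def conv (f g : ℕ → A) : ℕ → A :=
  fun N => ∑ mn ∈ Finset.HasAntidiagonal.antidiagonal N, f mn.1 * g mn.2

lemma sum_antidiag_range {h : ℕ × ℕ → ℚ} {k : ℕ}
    (hh : ∀ mn : ℕ × ℕ, k < mn.1 + mn.2 → h mn = 0) :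
    ∑ N ∈ Finset.range (k+1), ∑ mn ∈ Finset.HasAntidiagonal.antidiagonal N, h mn
      = ∑ mn ∈ Finset.range (k+1) ×ˢ Finset.range (k+1), h mn := by
  rw [← Finset.sum_biUnion]
  · refine Finset.sum_subset ?_ ?_
    · intro mn hmn
      rw [Finset.mem_biUnion] at hmn
      obtain ⟨N, hN, hmn⟩ := hmn
      rw [Finset.mem_range] at hN
      rw [Finset.HasAntidiagonal.mem_antidiagonal] at hmn
      rw [Finset.mem_product, Finset.mem_range, Finset.mem_range]
      omega
    · intro mn _ hmn
      refine hh mn ?_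
      by_contra hc
      exact hmn (Finset.mem_biUnion.mpr ⟨mn.1 + mn.2, Finset.mem_range.mpr (by omega),
        Finset.HasAntidiagonal.mem_antidiagonal.mpr rfl⟩)
  · intro N1 _ N2 _ hne
    simp only [Finset.disjoint_left]
    intro mn h1 h2
    rw [Finset.HasAntidiagonal.mem_antidiagonal] at h1 h2
    exact hne (h1 ▸ h2 ▸ rfl)

lemma ps_mul {f g : ℕ → A} (hf : Ord f) (hg : Ord g) :
    ps f * ps g = ps (conv f g) := by
  ext k
  rw [PowerSeries.coeff_mul, coeff_ps]
  have hR : ∀ N ∈ Finset.range (k+1), PowerSeries.coeff k (conv f g N)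
      = ∑ mn ∈ Finset.HasAntidiagonal.antidiagonal N,
          ∑ ij ∈ Finset.HasAntidiagonal.antidiagonal k,
            PowerSeries.coeff ij.1 (f mn.1) * PowerSeries.coeff ij.2 (g mn.2) := by
    intro N _
    rw [conv, map_sum]
    exact Finset.sum_congr rfl fun mn _ => PowerSeries.coeff_mul k _ _
  rw [Finset.sum_congr rfl hR, sum_antidiag_range]
  · have hL : ∀ ij ∈ Finset.HasAntidiagonal.antidiagonal k,
        PowerSeries.coeff ij.1 (ps f) * PowerSeries.coeff ij.2 (ps g)
        = ∑ mn ∈ Finset.range (k+1) ×ˢ Finset.range (k+1),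
            PowerSeries.coeff ij.1 (f mn.1) * PowerSeries.coeff ij.2 (g mn.2) := by
      intro ij hij
      rw [Finset.HasAntidiagonal.mem_antidiagonal] at hij
      rw [coeff_ps_ext hf ij.1 (k+1) (by omega), coeff_ps_ext hg ij.2 (k+1) (by omega),
        Finset.sum_mul_sum]
      rw [← Finset.sum_product']
    rw [Finset.sum_congr rfl hL, Finset.sum_comm]
  · intro mn hmn
    refine Finset.sum_eq_zero fun ij hij => ?_
    rw [Finset.HasAntidiagonal.mem_antidiagonal] at hij
    rcases lt_or_ge ij.1 mn.1 with h1 | h1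
    · rw [hf mn.1 _ h1, zero_mul]
    · rw [hg mn.2 ij.2 (by omega), mul_zero]

lemma ps_of_two {f : ℕ → A} (hf : Ord f) (h2 : ∀ n, 2 ≤ n → f n = 0) :
    ps f = f 0 + f 1 := by
  ext k
  rw [map_add, coeff_ps]
  rcases Nat.eq_zero_or_pos k with rfl | hk
  · rw [Finset.sum_range_one, hf 1 0 (by omega)]
    ring
  · have hsub : Finset.range 2 ⊆ Finset.range (k+1) := Finset.range_subset_range.mpr (by omega)
    rw [← Finset.sum_subset hsub (fun n _ hn => by
      rw [h2 n (by simp at hn; omega)]; simp)]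
    rw [Finset.sum_range_succ, Finset.sum_range_one]

/-! ### The quadratic extension `ℚ[[u]][x]/(x²+ux+1)` -/

structure S where
  fst : A
  snd : A

namespace S

lemma ext' {a b : S} (h1 : a.fst = b.fst) (h2 : a.snd = b.snd) : a = b := by
  cases a; cases b; simp_all

noncomputable instance : Zero S := ⟨⟨0, 0⟩⟩
noncomputable instance : One S := ⟨⟨1, 0⟩⟩
noncomputable instance : Add S := ⟨fun a b => ⟨a.fst + b.fst, a.snd + b.snd⟩⟩
noncomputable instance : Neg S := ⟨fun a => ⟨-a.fst, -a.snd⟩⟩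
noncomputable instance : Sub S := ⟨fun a b => ⟨a.fst - b.fst, a.snd - b.snd⟩⟩
noncomputable instance : Mul S := ⟨fun a b => ⟨a.fst * b.fst - a.snd * b.snd,
    a.fst * b.snd + a.snd * b.fst - u * a.snd * b.snd⟩⟩

lemma fst_mul (a b : S) : (a * b).fst = a.fst * b.fst - a.snd * b.snd := rfl
lemma snd_mul (a b : S) : (a * b).snd = a.fst * b.snd + a.snd * b.fst - u * a.snd * b.snd := rfl
lemma fst_add (a b : S) : (a + b).fst = a.fst + b.fst := rfl
lemma snd_add (a b : S) : (a + b).snd = a.snd + b.snd := rfl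
lemma fst_neg (a : S) : (-a).fst = -a.fst := rfl
lemma snd_neg (a : S) : (-a).snd = -a.snd := rfl
lemma fst_sub (a b : S) : (a - b).fst = a.fst - b.fst := rfl
lemma snd_sub (a b : S) : (a - b).snd = a.snd - b.snd := rfl
lemma fst_one : (1 : S).fst = 1 := rfl
lemma snd_one : (1 : S).snd = 0 := rfl
lemma fst_zero : (0 : S).fst = 0 := rfl
lemma snd_zero : (0 : S).snd = 0 := rfl

noncomputable instance : CommRing S where
  add_assoc a b c := ext' (by simp [fst_add]; ring) (by simp [snd_add]; ring)
  zero_add a := ext' (by simp [fst_add, fst_zero]) (by simp [snd_add, snd_zero])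
  add_zero a := ext' (by simp [fst_add, fst_zero]) (by simp [snd_add, snd_zero])
  add_comm a b := ext' (by simp [fst_add]; ring) (by simp [snd_add]; ring)
  neg_add_cancel a := ext' (by simp [fst_add, fst_neg, fst_zero])
    (by simp [snd_add, snd_neg, snd_zero])
  sub_eq_add_neg a b := ext' (by simp [fst_sub, fst_add, fst_neg]; ring)
    (by simp [snd_sub, snd_add, snd_neg]; ring)
  mul_assoc a b c := ext' (by simp [fst_mul, snd_mul]; ring) (by simp [fst_mul, snd_mul]; ring)
  one_mul a := ext' (by simp [fst_mul, fst_one, snd_one]) (by simp [snd_mul, fst_one, snd_one])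
  mul_one a := ext' (by simp [fst_mul, fst_one, snd_one]) (by simp [snd_mul, fst_one, snd_one])
  left_distrib a b c := ext' (by simp [fst_mul, fst_add, snd_add]; ring)
    (by simp [snd_mul, fst_add, snd_add]; ring)
  right_distrib a b c := ext' (by simp [fst_mul, fst_add, snd_add]; ring)
    (by simp [snd_mul, fst_add, snd_add]; ring)
  mul_comm a b := ext' (by simp [fst_mul]; ring) (by simp [snd_mul]; ring)
  zero_mul a := ext' (by simp [fst_mul, fst_zero, snd_zero])
    (by simp [snd_mul, fst_zero, snd_zero])
  mul_zero a := ext' (by simp [fst_mul, fst_zero, snd_zero])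
    (by simp [snd_mul, fst_zero, snd_zero])
  nsmul := nsmulRec
  zsmul := zsmulRec

/-- the scalar embedding -/
noncomputable def iota : A →+* S where
  toFun p := ⟨p, 0⟩
  map_one' := ext' (by simp [fst_one]) (by simp [snd_one])
  map_mul' p q := ext' (by simp [fst_mul]) (by simp [snd_mul])
  map_zero' := ext' (by simp [fst_zero]) (by simp [snd_zero])
  map_add' p q := ext' (by simp [fst_add]) (by simp [snd_add])

lemma iota_fst (p : A) : (iota p).fst = p := rfl
lemma iota_snd (p : A) : (iota p).snd = 0 := rfl

lemma iota_injective : Function.Injective iota := by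
  intro p q h
  have := congrArg S.fst h
  simpa [iota_fst] using this

/-- the root x -/
noncomputable def x : S := ⟨0, 1⟩
/-- the conjugate root -/
noncomputable def xb : S := ⟨-u, -1⟩

lemma fst_x : x.fst = 0 := rfl
lemma snd_x : x.snd = 1 := rfl
lemma fst_xb : xb.fst = -u := rfl
lemma snd_xb : xb.snd = -1 := rfl

lemma x_add_xb : x + xb = iota (-u) :=
  ext' (by simp [fst_add, fst_x, fst_xb, map_neg, fst_neg, iota_fst])
    (by simp [snd_add, snd_x, snd_xb, map_neg, snd_neg, iota_snd])

lemma x_mul_xb : x * xb = 1 :=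
  ext' (by simp [fst_mul, fst_x, snd_x, fst_xb, snd_xb, fst_one])
    (by simp [snd_mul, fst_x, snd_x, fst_xb, snd_xb, snd_one])

lemma fst_iota_mul (p : A) (s : S) : (iota p * s).fst = p * s.fst := by
  simp [fst_mul, iota_fst, iota_snd]
lemma snd_iota_mul (p : A) (s : S) : (iota p * s).snd = p * s.snd := by
  simp [snd_mul, iota_fst, iota_snd]

/-- fst as additive hom -/
noncomputable def fstHom : S →+ A where
  toFun := S.fst
  map_zero' := rfl
  map_add' a b := fst_add a b

/-- snd as additive hom -/
noncomputable def sndHom : S →+ A where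
  toFun := S.snd
  map_zero' := rfl
  map_add' a b := snd_add a b

end S

/-! ### Summation in S -/

open S

noncomputable def Ssum (F : ℕ → S) : S := ⟨ps (fun n => (F n).fst), ps (fun n => (F n).snd)⟩

def OrdS (F : ℕ → S) : Prop := Ord (fun n => (F n).fst) ∧ Ord (fun n => (F n).snd)

lemma Ssum_fst (F : ℕ → S) : (Ssum F).fst = ps (fun n => (F n).fst) := rfl
lemma Ssum_snd (F : ℕ → S) : (Ssum F).snd = ps (fun n => (F n).snd) := rfl

lemma Ssum_congr {F G : ℕ → S} (h : ∀ n, F n = G n) : Ssum F = Ssum G := by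
  have : F = G := funext h
  rw [this]

noncomputable def Sconv (F G : ℕ → S) : ℕ → S :=
  fun N => ∑ mn ∈ Finset.HasAntidiagonal.antidiagonal N, F mn.1 * G mn.2

lemma Ssum_add (F G : ℕ → S) : Ssum (fun n => F n + G n) = Ssum F + Ssum G := by
  refine S.ext' ?_ ?_
  · rw [fst_add, Ssum_fst, Ssum_fst, Ssum_fst, ← ps_add]
    exact ps_congr fun n => fst_add _ _
  · rw [snd_add, Ssum_snd, Ssum_snd, Ssum_snd, ← ps_add]
    exact ps_congr fun n => snd_add _ _

lemma OG.mul {p q : A} {m n : ℕ} (hp : OG p m) (hq : OG q n) : OG (p * q) (m + n) := by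
  intro k hk
  rw [PowerSeries.coeff_mul]
  refine Finset.sum_eq_zero fun ij hij => ?_
  rw [Finset.HasAntidiagonal.mem_antidiagonal] at hij
  rcases lt_or_ge ij.1 m with h1 | h1
  · rw [hp _ h1, zero_mul]
  · rw [hq ij.2 (by omega), mul_zero]

lemma OG.add {p q : A} {n : ℕ} (hp : OG p n) (hq : OG q n) : OG (p + q) n := by
  intro k hk; simp [hp k hk, hq k hk]

lemma OG.sub {p q : A} {n : ℕ} (hp : OG p n) (hq : OG q n) : OG (p - q) n := by
  intro k hk; simp [hp k hk, hq k hk]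

lemma OG.const_mul {p : A} {n : ℕ} (a : A) (hp : OG p n) : OG (a * p) n := by
  intro k hk
  rw [PowerSeries.coeff_mul]
  refine Finset.sum_eq_zero fun ij hij => ?_
  rw [Finset.HasAntidiagonal.mem_antidiagonal] at hij
  rw [hp ij.2 (by omega), mul_zero]

lemma Ord_conv {f g : ℕ → A} (hf : Ord f) (hg : Ord g) : Ord (conv f g) := by
  intro N k hk
  rw [conv, map_sum]
  refine Finset.sum_eq_zero fun mn hmn => ?_
  rw [Finset.HasAntidiagonal.mem_antidiagonal] at hmn
  exact OG.mul (hf mn.1) (hg mn.2) k (by omega)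

lemma fstHom_apply (s : S) : S.fstHom s = s.fst := rfl
lemma sndHom_apply (s : S) : S.sndHom s = s.snd := rfl

lemma Sconv_fst (F G : ℕ → S) (N : ℕ) :
    (Sconv F G N).fst
      = conv (fun n => (F n).fst) (fun n => (G n).fst) N
        - conv (fun n => (F n).snd) (fun n => (G n).snd) N := by
  rw [Sconv, ← fstHom_apply, map_sum, conv, conv, ← Finset.sum_sub_distrib]
  exact Finset.sum_congr rfl fun mn _ => fst_mul _ _

lemma Sconv_snd (F G : ℕ → S) (N : ℕ) :
    (Sconv F G N).snd
      = conv (fun n => (F n).fst) (fun n => (G n).snd) N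
        + conv (fun n => (F n).snd) (fun n => (G n).fst) N
        - u * conv (fun n => (F n).snd) (fun n => (G n).snd) N := by
  rw [Sconv, ← sndHom_apply, map_sum, conv, conv, conv, Finset.mul_sum,
    ← Finset.sum_add_distrib, ← Finset.sum_sub_distrib]
  refine Finset.sum_congr rfl fun mn _ => ?_
  rw [sndHom_apply, snd_mul]
  ring

lemma OrdS_Sconv {F G : ℕ → S} (hF : OrdS F) (hG : OrdS G) : OrdS (Sconv F G) := by
  obtain ⟨hF1, hF2⟩ := hF
  obtain ⟨hG1, hG2⟩ := hG
  constructor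
  · intro N
    rw [show (fun n => (Sconv F G n).fst) N = _ from Sconv_fst F G N]
    exact OG.sub (Ord_conv hF1 hG1 N) (Ord_conv hF2 hG2 N)
  · intro N
    rw [show (fun n => (Sconv F G n).snd) N = _ from Sconv_snd F G N]
    exact OG.sub (OG.add (Ord_conv hF1 hG2 N) (Ord_conv hF2 hG1 N))
      (OG.const_mul u (Ord_conv hF2 hG2 N))

lemma Ssum_mul {F G : ℕ → S} (hF : OrdS F) (hG : OrdS G) :
    Ssum F * Ssum G = Ssum (Sconv F G) := by
  obtain ⟨hF1, hF2⟩ := hF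
  obtain ⟨hG1, hG2⟩ := hG
  refine S.ext' ?_ ?_
  · rw [fst_mul, Ssum_fst, Ssum_fst, Ssum_snd, Ssum_snd, Ssum_fst,
      ps_mul hF1 hG1, ps_mul hF2 hG2, ← ps_sub]
    exact ps_congr fun N => (Sconv_fst F G N).symm
  · rw [snd_mul, Ssum_fst, Ssum_fst, Ssum_snd, Ssum_snd, Ssum_snd, mul_assoc u,
      ps_mul hF1 hG2, ps_mul hF2 hG1, ps_mul hF2 hG2,
      ps_const_mul (Ord_conv hF2 hG2) u, ← ps_add, ← ps_sub]
    exact ps_congr fun N => (Sconv_snd F G N).symm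

lemma Ssum_of_two {F : ℕ → S} (hF : OrdS F) (h2 : ∀ n, 2 ≤ n → F n = 0) :
    Ssum F = F 0 + F 1 := by
  refine S.ext' ?_ ?_
  · rw [Ssum_fst, fst_add, ps_of_two hF.1 (fun n hn => by rw [h2 n hn]; rfl)]
  · rw [Ssum_snd, snd_add, ps_of_two hF.2 (fun n hn => by rw [h2 n hn]; rfl)]

lemma Ssum_iota (h : ℕ → A) : Ssum (fun n => iota (h n)) = iota (ps h) := by
  refine S.ext' ?_ ?_
  · rw [Ssum_fst, iota_fst]
    exact ps_congr fun n => iota_fst _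
  · rw [Ssum_snd, iota_snd]
    have : (fun n => (iota (h n)).snd) = fun _ => (0 : A) := funext fun n => iota_snd _
    rw [this]
    exact ps_zero

/-! ### Vandermonde for rational binomial coefficients -/

lemma ratChoose_zero (γ : ℚ) : ratChoose γ 0 = 1 := by
  simp [ratChoose]

lemma ratChoose_succ (γ : ℚ) (n : ℕ) :
    (n + 1 : ℚ) * ratChoose γ (n + 1) = (γ - n) * ratChoose γ n := by
  rw [ratChoose, ratChoose, descPochhammer_succ_eval, Nat.factorial_succ]
  have h1 : ((n+1).factorial : ℚ) ≠ 0 := Nat.cast_ne_zero.mpr (Nat.factorial_ne_zero _)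
  have h2 : ((n).factorial : ℚ) ≠ 0 := Nat.cast_ne_zero.mpr (Nat.factorial_ne_zero _)
  field_simp [Nat.factorial_succ]
  push_cast
  ring

lemma vandermonde (N : ℕ) (γ δ : ℚ) :
    ∑ mn ∈ Finset.HasAntidiagonal.antidiagonal N, ratChoose γ mn.1 * ratChoose δ mn.2
      = ratChoose (γ + δ) N := by
  induction N with
  | zero => simp [ratChoose_zero]
  | succ N ih =>
    have key : (N + 1 : ℚ) * ∑ mn ∈ Finset.HasAntidiagonal.antidiagonal (N+1),
        ratChoose γ mn.1 * ratChoose δ mn.2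
        = (γ + δ - N) * ∑ mn ∈ Finset.HasAntidiagonal.antidiagonal N, ratChoose γ mn.1 * ratChoose δ mn.2 := by
      have expand : ∀ mn : ℕ × ℕ, mn ∈ Finset.HasAntidiagonal.antidiagonal (N+1) →
          (N + 1 : ℚ) * (ratChoose γ mn.1 * ratChoose δ mn.2)
          = (mn.1 : ℚ) * ratChoose γ mn.1 * ratChoose δ mn.2
            + ratChoose γ mn.1 * ((mn.2 : ℚ) * ratChoose δ mn.2) := by
        intro mn hmn
        rw [Finset.HasAntidiagonal.mem_antidiagonal] at hmn
        have : (mn.1 : ℚ) + mn.2 = (N : ℚ) + 1 := by exact_mod_cast congrArg Nat.cast hmn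
        linear_combination (-(ratChoose γ mn.1 * ratChoose δ mn.2)) * this
      rw [Finset.mul_sum, Finset.sum_congr rfl expand, Finset.sum_add_distrib]
      have e1 : ∑ mn ∈ Finset.HasAntidiagonal.antidiagonal (N+1),
          (mn.1 : ℚ) * ratChoose γ mn.1 * ratChoose δ mn.2
          = ∑ mn ∈ Finset.HasAntidiagonal.antidiagonal N, (γ - mn.1) * ratChoose γ mn.1 * ratChoose δ mn.2 := by
        rw [Finset.Nat.sum_antidiagonal_succ]
        simp only [Nat.cast_zero, zero_mul, zero_add]
        refine Finset.sum_congr rfl fun mn _ => ?_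
        have := ratChoose_succ γ mn.1
        push_cast
        rw [show ((mn.1:ℚ) + 1) * ratChoose γ (mn.1 + 1) = (γ - mn.1) * ratChoose γ mn.1 by
          exact_mod_cast this]
      have e2 : ∑ mn ∈ Finset.HasAntidiagonal.antidiagonal (N+1),
          ratChoose γ mn.1 * ((mn.2 : ℚ) * ratChoose δ mn.2)
          = ∑ mn ∈ Finset.HasAntidiagonal.antidiagonal N, ratChoose γ mn.1 * ((δ - mn.2) * ratChoose δ mn.2) := by
        rw [Finset.Nat.sum_antidiagonal_succ']
        simp only [Nat.cast_zero, zero_mul, mul_zero, zero_add]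
        refine Finset.sum_congr rfl fun mn _ => ?_
        have := ratChoose_succ δ mn.2
        push_cast
        rw [show ((mn.2:ℚ) + 1) * ratChoose δ (mn.2 + 1) = (δ - mn.2) * ratChoose δ mn.2 by
          exact_mod_cast this]
      rw [e1, e2, ← Finset.sum_add_distrib, Finset.mul_sum]
      refine Finset.sum_congr rfl fun mn hmn => ?_
      rw [Finset.HasAntidiagonal.mem_antidiagonal] at hmn
      have : (mn.1 : ℚ) + mn.2 = (N : ℚ) := by exact_mod_cast congrArg Nat.cast hmn
      linear_combination (-(ratChoose γ mn.1 * ratChoose δ mn.2)) * this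
    rw [ih] at key
    have h1 : (N + 1 : ℚ) ≠ 0 := by positivity
    have hrc := ratChoose_succ (γ + δ) N
    have goal : (N + 1 : ℚ) * ∑ mn ∈ Finset.HasAntidiagonal.antidiagonal (N+1),
        ratChoose γ mn.1 * ratChoose δ mn.2
        = (N + 1 : ℚ) * ratChoose (γ + δ) (N + 1) := by
      rw [key, hrc]
    exact mul_left_cancel₀ h1 goal

lemma ratChoose_one (N : ℕ) : ratChoose 1 N = if N ≤ 1 then 1 else 0 := by
  induction N with
  | zero => simp [ratChoose_zero]
  | succ N ih =>
    have h := ratChoose_succ 1 N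
    have h1 : (N + 1 : ℚ) ≠ 0 := by positivity
    have hval : ratChoose 1 (N+1) = (1 - N) * ratChoose 1 N / (N+1) := by
      field_simp
      linarith [h]
    rcases Nat.lt_or_ge N 1 with h0 | h0
    · interval_cases N
      rw [hval, ratChoose_zero]
      norm_num
    rcases Nat.lt_or_ge N 2 with h2 | h2
    · interval_cases N
      rw [hval]
      norm_num
    · rw [hval, ih, if_neg (by omega), if_neg (by omega)]
      simp

/-! ### The binomial families in S -/

noncomputable def fam (γ : ℚ) (ξ : S) : ℕ → S :=
  fun n => iota (PowerSeries.C (ratChoose γ n) * u ^ n) * ξ ^ n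

lemma OrdS_fam (γ : ℚ) (ξ : S) : OrdS (fam γ ξ) := by
  constructor
  · intro n
    show OG (fam γ ξ n).fst n
    rw [fam, fst_iota_mul,
      show PowerSeries.C (ratChoose γ n) * u ^ n * (ξ ^ n).fst
        = PowerSeries.X ^ n * (PowerSeries.C (ratChoose γ n) * (ξ ^ n).fst) by rw [u]; ring]
    exact OG_X_pow_mul _ n
  · intro n
    show OG (fam γ ξ n).snd n
    rw [fam, snd_iota_mul,
      show PowerSeries.C (ratChoose γ n) * u ^ n * (ξ ^ n).snd
        = PowerSeries.X ^ n * (PowerSeries.C (ratChoose γ n) * (ξ ^ n).snd) by rw [u]; ring]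
    exact OG_X_pow_mul _ n

lemma fam_mul (γ δ : ℚ) (ξ : S) (m n : ℕ) :
    fam γ ξ m * fam δ ξ n
      = iota (PowerSeries.C (ratChoose γ m * ratChoose δ n) * u ^ (m + n)) * ξ ^ (m + n) := by
  have h1 : (PowerSeries.C (ratChoose γ m) * u ^ m) * (PowerSeries.C (ratChoose δ n) * u ^ n)
      = PowerSeries.C (ratChoose γ m * ratChoose δ n) * u ^ (m + n) := by
    rw [map_mul, pow_add]; ring
  calc fam γ ξ m * fam δ ξ n
      = iota (PowerSeries.C (ratChoose γ m) * u ^ m)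
          * iota (PowerSeries.C (ratChoose δ n) * u ^ n) * (ξ ^ m * ξ ^ n) := by
        rw [fam, fam]; ring
    _ = _ := by rw [← map_mul, h1, ← pow_add]

lemma fam_zero (γ : ℚ) (ξ : S) : fam γ ξ 0 = 1 := by
  simp [fam, ratChoose_zero]

lemma Sconv_fam (γ δ : ℚ) (ξ : S) (N : ℕ) :
    Sconv (fam γ ξ) (fam δ ξ) N = fam (γ + δ) ξ N := by
  rw [Sconv]
  have h : ∀ mn ∈ Finset.HasAntidiagonal.antidiagonal N, fam γ ξ mn.1 * fam δ ξ mn.2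
      = iota (PowerSeries.C (ratChoose γ mn.1 * ratChoose δ mn.2) * u ^ N) * ξ ^ N := by
    intro mn hmn
    rw [Finset.HasAntidiagonal.mem_antidiagonal] at hmn
    rw [fam_mul, hmn]
  rw [Finset.sum_congr rfl h, ← Finset.sum_mul, ← map_sum, ← Finset.sum_mul, ← map_sum,
    vandermonde N γ δ, fam]

lemma fam_one_big (ξ : S) : ∀ n, 2 ≤ n → fam 1 ξ n = 0 := by
  intro n hn
  rw [fam, ratChoose_one, if_neg (by omega), map_zero, zero_mul, map_zero, zero_mul]

lemma Ssum_fam_cube (ξ : S) : Ssum (fam (1/3) ξ) ^ 3 = 1 + iota u * ξ := by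
  have e2 : Ssum (fam (1/3) ξ) * Ssum (fam (1/3) ξ) = Ssum (fam (2/3) ξ) := by
    rw [Ssum_mul (OrdS_fam _ _) (OrdS_fam _ _)]
    refine Ssum_congr fun N => ?_
    rw [Sconv_fam]
    norm_num
  have e3 : Ssum (fam (2/3) ξ) * Ssum (fam (1/3) ξ) = Ssum (fam 1 ξ) := by
    rw [Ssum_mul (OrdS_fam _ _) (OrdS_fam _ _)]
    refine Ssum_congr fun N => ?_
    rw [Sconv_fam]
    norm_num
  have e4 : Ssum (fam 1 ξ) = fam 1 ξ 0 + fam 1 ξ 1 :=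
    Ssum_of_two (OrdS_fam _ _) (fam_one_big ξ)
  have e5 : fam 1 ξ 0 = 1 := fam_zero 1 ξ
  have e6 : fam 1 ξ 1 = iota u * ξ := by
    rw [fam, ratChoose_one]
    norm_num
  have : Ssum (fam (1/3) ξ) ^ 3 = Ssum (fam (1/3) ξ) * Ssum (fam (1/3) ξ) * Ssum (fam (1/3) ξ) := by
    ring
  rw [this, e2, e3, e4, e5, e6]

/-! ### Chebyshev trace identity -/

noncomputable def TT (n : ℕ) : Polynomial ℚ :=
  (Polynomial.Chebyshev.T ℚ (n : ℤ)).comp (Polynomial.C (-(1 : ℚ)/ 2) * Polynomial.X)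

lemma coe_two : (((2 : Polynomial ℚ)) : A) = 2 := by
  rw [← Polynomial.coeToPowerSeries.ringHom_apply]
  exact map_ofNat _ 2

lemma CmulTwo : PowerSeries.C (-(1:ℚ)/2) * 2 = -1 := by
  rw [show (2 : A) = PowerSeries.C 2 from (map_ofNat _ 2).symm, ← map_mul]
  norm_num

lemma TT_rec (n : ℕ) :
    TT (n + 2) = 2 * (Polynomial.C (-(1 : ℚ)/ 2) * Polynomial.X) * TT (n + 1) - TT n := by
  rw [TT, TT, TT]
  rw [show ((n + 2 : ℕ) : ℤ) = (n : ℤ) + 2 by push_cast; ring,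
    show ((n + 1 : ℕ) : ℤ) = (n : ℤ) + 1 by push_cast; ring]
  rw [Polynomial.Chebyshev.T_add_two]
  simp [Polynomial.sub_comp, Polynomial.mul_comp, Polynomial.X_comp]

lemma u_def : u = PowerSeries.X := rfl

lemma trace (n : ℕ) : S.x ^ n + S.xb ^ n = iota (2 * ((TT n : Polynomial ℚ) : A)) := by
  induction n using Nat.twoStepInduction with
  | zero =>
    rw [pow_zero, pow_zero]
    have hTT : TT 0 = 1 := by
      rw [TT]
      simp [Polynomial.Chebyshev.T_zero]
    rw [hTT, Polynomial.coe_one, mul_one, show (iota 2 : S) = 2 from map_ofNat iota 2]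
    norm_num
  | one =>
    rw [pow_one, pow_one]
    have hTT : TT 1 = Polynomial.C (-(1 : ℚ)/ 2) * Polynomial.X := by
      rw [TT]
      simp [Polynomial.Chebyshev.T_one]
    rw [hTT, S.x_add_xb]
    congr 1
    rw [Polynomial.coe_mul, Polynomial.coe_C, Polynomial.coe_X, u_def]
    linear_combination (-(PowerSeries.X : A)) * CmulTwo
  | more n ih0 ih1 =>
    have hkey : S.x ^ (n+2) + S.xb ^ (n+2)
        = (S.x + S.xb) * (S.x ^ (n+1) + S.xb ^ (n+1)) - (S.x * S.xb) * (S.x ^ n + S.xb ^ n) := by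
      ring
    rw [hkey, S.x_add_xb, S.x_mul_xb, one_mul, ih0, ih1, ← map_mul, ← map_sub]
    congr 1
    rw [TT_rec n, Polynomial.coe_sub, Polynomial.coe_mul, Polynomial.coe_mul, Polynomial.coe_mul,
      Polynomial.coe_C, Polynomial.coe_X, coe_two, u_def]
    linear_combination (-(2 * (PowerSeries.X : A) * ((TT (n+1) : Polynomial ℚ) : A))) * CmulTwo

/-! ### The bridge to `chebSummand` and the main argument -/

noncomputable def qq (n : ℕ) : A := ((chebSummand n : Polynomial ℚ) : A)

lemma qq_eq (n : ℕ) :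
    qq n = PowerSeries.C (ratChoose (1/3) n) * u ^ n * (2 * ((TT n : Polynomial ℚ) : A)) := by
  rw [qq, chebSummand]
  have hTT : (Polynomial.Chebyshev.T ℚ (n : ℤ)).comp
      (Polynomial.C (-(1 : ℚ) / 2) * Polynomial.X) = TT n := rfl
  rw [hTT, Polynomial.coe_mul, Polynomial.coe_mul, Polynomial.coe_pow,
    Polynomial.coe_C, Polynomial.coe_X]
  rw [map_mul (PowerSeries.C (R := ℚ)) 2 (ratChoose (1/3) n), u_def,
    show PowerSeries.C 2 = (2 : A) from map_ofNat _ 2]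
  ring

lemma Ord_qq : Ord qq := by
  intro n
  rw [show qq n = PowerSeries.X ^ n
      * (PowerSeries.C (ratChoose (1/3) n) * (2 * ((TT n : Polynomial ℚ) : A))) by
    rw [qq_eq, u_def]; ring]
  exact OG_X_pow_mul _ n

lemma mul_eq_one_of_cube {y : S} (h3 : y ^ 3 = 1)
    (h1 : PowerSeries.constantCoeff y.fst = 1)
    (h2 : PowerSeries.constantCoeff y.snd = 0) : y = 1 := by
  set z := y * y + y + 1 with hzdef
  have hzfst : z.fst = y.fst * y.fst - y.snd * y.snd + y.fst + 1 := by
    rw [hzdef, fst_add, fst_add, fst_mul, fst_one]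
  have hzsnd : z.snd = y.fst * y.snd + y.snd * y.fst - u * y.snd * y.snd + y.snd := by
    rw [hzdef, snd_add, snd_add, snd_mul, snd_one, add_zero]
  have hccz1 : PowerSeries.constantCoeff z.fst = 3 := by
    rw [hzfst]
    simp [h1, h2]
    norm_num
  have hccz2 : PowerSeries.constantCoeff z.snd = 0 := by
    rw [hzsnd]
    simp [h1, h2]
  have hnorm : z * (⟨z.fst - u * z.snd, -z.snd⟩ : S)
      = iota (z.fst * z.fst - u * z.fst * z.snd + z.snd * z.snd) := by
    refine S.ext' ?_ ?_
    · rw [fst_mul, iota_fst]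
      dsimp only
      ring
    · rw [snd_mul, iota_snd]
      dsimp only
      ring
  have hνu : IsUnit (z.fst * z.fst - u * z.fst * z.snd + z.snd * z.snd) := by
    rw [PowerSeries.isUnit_iff_constantCoeff]
    have : PowerSeries.constantCoeff (z.fst * z.fst - u * z.fst * z.snd + z.snd * z.snd)
        = 9 := by
      simp [hccz1, hccz2]
      norm_num
    rw [this]
    exact isUnit_iff_ne_zero.mpr (by norm_num)
  have hzu : IsUnit z := isUnit_of_dvd_unit ⟨_, hnorm.symm⟩ (hνu.map iota)
  have hyz : (y - 1) * z = 0 := by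
    have h : (y - 1) * z = y ^ 3 - 1 := by rw [hzdef]; ring
    rw [h, h3, sub_self]
  obtain ⟨v, hv⟩ := hzu
  have h2' : y - 1 = 0 := by
    have : (y - 1) * (↑v * ↑v⁻¹) = 0 := by
      rw [← mul_assoc, hv, hyz, zero_mul]
    rwa [Units.mul_inv, mul_one] at this
  have := sub_eq_zero.mp h2'
  exact this

end ChebAux

open ChebAux ChebAux.S

/-- The series `t = Σ_n 2·C(1/3,n)·u^n·T_n(-u/2)` is well defined in `ℚ[[u]]` (the `n`-th
summand has order at least `n`), has constant coefficient `2`, and satisfies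
`t³ - 3t = 2 - u²`. -/
theorem stmt_16 :
    (∀ n k : ℕ, k < n → (chebSummand n).coeff k = 0) ∧
    (PowerSeries.constantCoeff (R := ℚ))
      (PowerSeries.mk fun k => ∑ n ∈ Finset.range (k + 1), (chebSummand n).coeff k) = 2 ∧
    (PowerSeries.mk fun k => ∑ n ∈ Finset.range (k + 1), (chebSummand n).coeff k) ^ 3
      - 3 * (PowerSeries.mk fun k => ∑ n ∈ Finset.range (k + 1), (chebSummand n).coeff k)
      = 2 - PowerSeries.X ^ 2 := by
  have hOrd : ∀ n k : ℕ, k < n → (chebSummand n).coeff k = 0 := by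
    intro n k hk
    rw [chebSummand, Polynomial.coeff_C_mul, Polynomial.X_pow_mul, Polynomial.coeff_mul_X_pow',
      if_neg (by omega), mul_zero]
  refine ⟨hOrd, ?_, ?_⟩
  · rw [PowerSeries.constantCoeff_mk, Finset.sum_range_one]
    simp [chebSummand, ratChoose]
  · have hs : (PowerSeries.mk fun k => ∑ n ∈ Finset.range (k + 1), (chebSummand n).coeff k)
        = ps qq := by
      ext k
      rw [PowerSeries.coeff_mk, coeff_ps]
      exact Finset.sum_congr rfl fun n _ => (Polynomial.coeff_coe _ _).symm
    rw [hs]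
    have hiota : iota (ps qq) = Ssum (fam (1/3) ChebAux.S.x) + Ssum (fam (1/3) ChebAux.S.xb) := by
      rw [← Ssum_add]
      have h : ∀ n, fam (1/3) ChebAux.S.x n + fam (1/3) ChebAux.S.xb n = iota (qq n) := by
        intro n
        rw [fam, fam, ← mul_add, trace n, ← map_mul, qq_eq]
      rw [Ssum_congr h, Ssum_iota]
    set a := Ssum (fam (1/3) ChebAux.S.x) with hadef
    set b := Ssum (fam (1/3) ChebAux.S.xb) with hbdef
    have ha3 : a ^ 3 = 1 + iota u * ChebAux.S.x := Ssum_fam_cube ChebAux.S.x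
    have hb3 : b ^ 3 = 1 + iota u * ChebAux.S.xb := Ssum_fam_cube ChebAux.S.xb
    have hprod : (1 + iota u * ChebAux.S.x) * (1 + iota u * ChebAux.S.xb) = 1 := by
      refine S.ext' ?_ ?_
      · rw [fst_mul, fst_add, fst_add, snd_add, snd_add, fst_one, snd_one,
          fst_iota_mul, snd_iota_mul, fst_iota_mul, snd_iota_mul, fst_x, snd_x, fst_xb, snd_xb]
        ring
      · rw [snd_mul, fst_add, fst_add, snd_add, snd_add, fst_one, snd_one,
          fst_iota_mul, snd_iota_mul, fst_iota_mul, snd_iota_mul, fst_x, snd_x, fst_xb, snd_xb]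
        ring
    have hy3 : (a * b) ^ 3 = 1 := by rw [mul_pow, ha3, hb3, hprod]
    have hab : a * b = Ssum (Sconv (fam (1/3) ChebAux.S.x) (fam (1/3) ChebAux.S.xb)) :=
      Ssum_mul (OrdS_fam _ _) (OrdS_fam _ _)
    have hc0 : Sconv (fam (1/3) ChebAux.S.x) (fam (1/3) ChebAux.S.xb) 0 = 1 := by
      rw [Sconv, Finset.Nat.antidiagonal_zero, Finset.sum_singleton, fam_zero, fam_zero, one_mul]
    have hcc1 : PowerSeries.constantCoeff (a * b).fst = 1 := by
      rw [hab, Ssum_fst, ← PowerSeries.coeff_zero_eq_constantCoeff_apply, coeff_ps,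
        Finset.sum_range_one, hc0, fst_one]
      simp
    have hcc2 : PowerSeries.constantCoeff (a * b).snd = 0 := by
      rw [hab, Ssum_snd, ← PowerSeries.coeff_zero_eq_constantCoeff_apply, coeff_ps,
        Finset.sum_range_one, hc0, snd_one]
      simp
    have hab1 : a * b = 1 := mul_eq_one_of_cube hy3 hcc1 hcc2
    have htail : (1 + iota u * ChebAux.S.x) + (1 + iota u * ChebAux.S.xb) = iota (2 - u ^ 2) := by
      have h1 : (1 + iota u * ChebAux.S.x) + (1 + iota u * ChebAux.S.xb)
          = 2 + iota u * (ChebAux.S.x + ChebAux.S.xb) := by ring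
      rw [h1, x_add_xb, ← map_mul, show (2 : S) = iota 2 from (map_ofNat iota 2).symm, ← map_add]
      congr 1
      ring
    apply iota_injective
    rw [map_sub, map_pow, map_mul, map_ofNat, hiota]
    rw [show (2 : A) - PowerSeries.X ^ 2 = 2 - u ^ 2 from by rw [u_def]]
    linear_combination ha3 + hb3 + htail + (3 * (a + b)) * hab1
end

section
/- Let p be a prime and for m ≥ 1 let C(1/p, m) := (1/p)(1/p − 1)⋯(1/p − m + 1)/m! ∈ ℚ_p. Then v_p(C(1/p,m)) = (S_p(m) − p·m)/(p − 1), equivalently ‖C(1/p,m)‖_p = p^{(p·m − S_p(m))/(p−1)}, where S_p(m) is the sum of the base-p digits of m. Consequently the power series Σ_{m≥0} C(1/p,m) x^m over ℚ_p (the binomial series for (1+x)^{1/p}) has radius of convergence exactly p^{−p/(p−1)}: for every real ρ with 0 < ρ < p^{−p/(p−1)} one has ‖C(1/p,m)‖_p·ρ^m → 0, while for ρ = p^{−p/(p−1)} the sequence ‖C(1/p,m)‖_p·ρ^m does not tend to 0. -/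
/-- The generalized binomial coefficient `C(γ, m) = γ(γ-1)⋯(γ-m+1)/m!` for `γ ∈ ℚ_p`. -/
noncomputable def pChoose (p : ℕ) [Fact p.Prime] (γ : ℚ_[p]) (m : ℕ) : ℚ_[p] :=
  (descPochhammer ℚ_[p] m).eval γ / (m.factorial : ℚ_[p])

section aux

variable (p : ℕ) [hp : Fact p.Prime]

lemma aux_one_lt : (1 : ℝ) < (p : ℝ) := by exact_mod_cast hp.out.one_lt

lemma aux_norm_inv_p : ‖(1 / (p : ℚ_[p]))‖ = (p : ℝ) := by
  rw [one_div, norm_inv, Padic.norm_p, inv_inv]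

lemma aux_norm_factor (n : ℕ) : ‖(1 / (p : ℚ_[p])) - (n : ℚ_[p])‖ = (p : ℝ) := by
  have h1 : ‖(-(n : ℚ_[p]))‖ ≤ 1 := by
    rw [norm_neg]; exact_mod_cast Padic.norm_int_le_one (n : ℤ)
  have hne : ‖(1 / (p : ℚ_[p]))‖ ≠ ‖(-(n : ℚ_[p]))‖ := by
    rw [aux_norm_inv_p]
    exact fun h => absurd (h ▸ h1) (not_le.2 (aux_one_lt p))
  rw [sub_eq_add_neg, Padic.add_eq_max_of_ne hne, aux_norm_inv_p]
  rw [aux_norm_inv_p] at hne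
  exact max_eq_left (h1.trans (aux_one_lt p).le)

lemma aux_norm_desc (m : ℕ) :
    ‖(descPochhammer ℚ_[p] m).eval (1 / (p : ℚ_[p]))‖ = (p : ℝ) ^ m := by
  induction m with
  | zero => simp
  | succ n ih =>
    rw [descPochhammer_succ_eval, norm_mul, ih, aux_norm_factor, pow_succ]

lemma aux_desc_ne_zero (m : ℕ) :
    (descPochhammer ℚ_[p] m).eval (1 / (p : ℚ_[p])) ≠ 0 := by
  intro h
  have := aux_norm_desc p m
  rw [h, norm_zero] at this
  have hppos : (0:ℝ) < p := lt_trans one_pos (aux_one_lt p)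
  exact absurd this.symm (pow_ne_zero _ hppos.ne')

lemma aux_fact_ne_zero (m : ℕ) : ((m.factorial : ℚ_[p])) ≠ 0 := by
  exact_mod_cast m.factorial_ne_zero

lemma aux_norm_pChoose (m : ℕ) :
    ‖pChoose p (1 / (p : ℚ_[p])) m‖
      = (p : ℝ) ^ ((m : ℤ) + (padicValNat p m.factorial : ℤ)) := by
  have hfact : ‖((m.factorial : ℚ_[p]))‖ = (p : ℝ) ^ (-(padicValNat p m.factorial : ℤ)) := by
    rw [Padic.norm_eq_zpow_neg_valuation (aux_fact_ne_zero p m), Padic.valuation_natCast]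
  rw [pChoose, norm_div, aux_norm_desc, hfact]
  have hppos : (0:ℝ) < p := lt_trans one_pos (aux_one_lt p)
  rw [← zpow_natCast (p : ℝ) m, ← zpow_sub₀ hppos.ne', sub_neg_eq_add]

lemma aux_valuation_pChoose (m : ℕ) :
    (pChoose p (1 / (p : ℚ_[p])) m).valuation
      = -((m : ℤ) + (padicValNat p m.factorial : ℤ)) := by
  have hne : pChoose p (1 / (p : ℚ_[p])) m ≠ 0 :=
    div_ne_zero (aux_desc_ne_zero p m) (aux_fact_ne_zero p m)
  have h1 := Padic.norm_eq_zpow_neg_valuation hne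
  rw [aux_norm_pChoose] at h1
  have hp1 : (1 : ℝ) < (p : ℝ) := aux_one_lt p
  have := zpow_right_injective₀ (by positivity) hp1.ne' h1.symm
  linarith [this]

lemma aux_legendre (m : ℕ) :
    ((p : ℤ) - 1) * (padicValNat p m.factorial : ℤ)
      = (m : ℤ) - ((Nat.digits p m).sum : ℤ) := by
  have h := sub_one_mul_padicValNat_factorial (p := p) m
  have hle : (Nat.digits p m).sum ≤ m := Nat.digit_sum_le p m
  have hp1 : 1 ≤ p := hp.out.one_lt.le
  have h2 := congrArg (fun n : ℕ => (n : ℤ)) h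
  simp only [Nat.cast_mul, Nat.cast_sub hle, Nat.cast_sub hp1, Nat.cast_one] at h2
  exact h2

lemma aux_digits_pow_sum (k : ℕ) : (Nat.digits p (p ^ k)).sum = 1 := by
  induction k with
  | zero =>
    rw [pow_zero, Nat.digits_def' hp.out.one_lt (by norm_num),
      Nat.mod_eq_of_lt hp.out.one_lt, Nat.div_eq_of_lt hp.out.one_lt]
    simp
  | succ n ih =>
    have hpos : 0 < p ^ (n + 1) := pow_pos hp.out.pos _
    rw [Nat.digits_def' hp.out.one_lt hpos]
    have h1 : p ^ (n + 1) % p = 0 := by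
      simp [pow_succ, Nat.mul_mod_left]
    have h2 : p ^ (n + 1) / p = p ^ n := by
      rw [pow_succ, Nat.mul_div_cancel _ hp.out.pos]
    rw [h1, h2, List.sum_cons, ih]

end aux

/-- `v_p(C(1/p,m)) = (S_p(m) - p·m)/(p-1)`, i.e. `‖C(1/p,m)‖ = p^{(p·m-S_p(m))/(p-1)}`,
where `S_p(m)` is the sum of base-`p` digits of `m`; consequently the binomial series for
`(1+x)^{1/p}` has radius of convergence exactly `p^{-p/(p-1)}`. -/
theorem stmt_18 (p : ℕ) [hp : Fact p.Prime] :
    (∀ m : ℕ, 1 ≤ m →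
      ((p : ℤ) - 1) * (pChoose p (1 / (p : ℚ_[p])) m).valuation
        = ((Nat.digits p m).sum : ℤ) - (p : ℤ) * m) ∧
    (∀ m : ℕ, 1 ≤ m →
      ‖pChoose p (1 / (p : ℚ_[p])) m‖
        = (p : ℝ) ^ ((((p * m : ℕ) : ℝ) - ((Nat.digits p m).sum : ℝ)) / ((p : ℝ) - 1))) ∧
    (∀ ρ : ℝ, 0 < ρ → ρ < (p : ℝ) ^ (-(p : ℝ) / ((p : ℝ) - 1)) →
      Filter.Tendsto (fun m => ‖pChoose p (1 / (p : ℚ_[p])) m‖ * ρ ^ m)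
        Filter.atTop (nhds 0)) ∧
    ¬ Filter.Tendsto (fun m => ‖pChoose p (1 / (p : ℚ_[p])) m‖ *
        ((p : ℝ) ^ (-(p : ℝ) / ((p : ℝ) - 1))) ^ m) Filter.atTop (nhds 0) := by
  have hp1R : (1 : ℝ) < (p : ℝ) := aux_one_lt p
  have hp0R : (0 : ℝ) < (p : ℝ) := lt_trans one_pos hp1R
  have hpne : ((p : ℝ) - 1) ≠ 0 := by linarith
  -- claim 1
  have claim1 : ∀ m : ℕ,
      ((p : ℤ) - 1) * (pChoose p (1 / (p : ℚ_[p])) m).valuation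
        = ((Nat.digits p m).sum : ℤ) - (p : ℤ) * m := by
    intro m
    rw [aux_valuation_pChoose]
    have h := aux_legendre p m
    generalize (padicValNat p m.factorial : ℤ) = v at h ⊢
    generalize (((Nat.digits p m).sum : ℕ) : ℤ) = S at h ⊢
    linear_combination -h
  -- claim 2 as an rpow identity
  have claim2 : ∀ m : ℕ,
      ‖pChoose p (1 / (p : ℚ_[p])) m‖
        = (p : ℝ) ^ ((((p * m : ℕ) : ℝ) - ((Nat.digits p m).sum : ℝ)) / ((p : ℝ) - 1)) := by
    intro m
    rw [aux_norm_pChoose]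
    have key : (((p * m : ℕ) : ℝ) - ((Nat.digits p m).sum : ℝ)) / ((p : ℝ) - 1)
        = (((m : ℤ) + (padicValNat p m.factorial : ℤ) : ℤ) : ℝ) := by
      have hR : ((p : ℝ) - 1) * (padicValNat p m.factorial : ℝ)
          = (m : ℝ) - ((Nat.digits p m).sum : ℝ) := by
        have h2 := congrArg (fun z : ℤ => (z : ℝ)) (aux_legendre p m)
        simp only [Int.cast_mul, Int.cast_sub, Int.cast_one, Int.cast_natCast] at h2
        exact h2
      rw [div_eq_iff hpne, Int.cast_add, Int.cast_natCast, Int.cast_natCast, Nat.cast_mul]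
      linear_combination -hR
    rw [key, Real.rpow_intCast]
  refine ⟨fun m _ => claim1 m, fun m _ => claim2 m, ?_, ?_⟩
  · -- convergence for ρ < p^{-p/(p-1)}
    intro ρ hρ0 hρlt
    set c : ℝ := (p : ℝ) ^ ((p : ℝ) / ((p : ℝ) - 1)) with hc
    have hcpos : 0 < c := Real.rpow_pos_of_pos hp0R _
    have hr1 : c * ρ < 1 := by
      have h := mul_lt_mul_of_pos_left hρlt hcpos
      calc c * ρ < c * (p : ℝ) ^ (-(p : ℝ) / ((p : ℝ) - 1)) := h
        _ = 1 := by
          rw [hc, ← Real.rpow_add hp0R]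
          have h0 : (p:ℝ)/((p:ℝ)-1) + -(p:ℝ)/((p:ℝ)-1) = 0 := by ring
          rw [h0, Real.rpow_zero]
    have hbound : ∀ m : ℕ, ‖pChoose p (1 / (p : ℚ_[p])) m‖ * ρ ^ m ≤ (c * ρ) ^ m := by
      intro m
      rw [mul_pow]
      have h1 : ‖pChoose p (1 / (p : ℚ_[p])) m‖ ≤ c ^ m := by
        rw [claim2 m]
        have h2 : c ^ m = (p : ℝ) ^ (((p : ℝ) / ((p : ℝ) - 1)) * m) := by
          rw [hc, ← Real.rpow_natCast ((p:ℝ) ^ ((p : ℝ) / ((p : ℝ) - 1))) m,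
            ← Real.rpow_mul hp0R.le]
        rw [h2]
        apply Real.rpow_le_rpow_of_exponent_le hp1R.le
        have hS : (0 : ℝ) ≤ ((Nat.digits p m).sum : ℝ) := Nat.cast_nonneg _
        rw [div_le_iff₀ (by linarith : (0:ℝ) < (p:ℝ) - 1)]
        have hid : (p:ℝ)/((p:ℝ)-1)*(m:ℝ)*((p:ℝ)-1) = (p:ℝ)*(m:ℝ) := by
          field_simp
        generalize hs : (((Nat.digits p m).sum : ℕ) : ℝ) = S at hS ⊢
        push_cast
        linarith
      exact mul_le_mul_of_nonneg_right h1 (pow_nonneg hρ0.le m)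
    refine squeeze_zero' (Filter.Eventually.of_forall fun m => ?_)
      (Filter.Eventually.of_forall hbound)
      (tendsto_pow_atTop_nhds_zero_of_lt_one (by positivity) hr1)
    positivity
  · -- failure at ρ = p^{-p/(p-1)}
    intro htend
    set ρ : ℝ := (p : ℝ) ^ (-(p : ℝ) / ((p : ℝ) - 1)) with hρ
    have hval : ∀ k : ℕ, ‖pChoose p (1 / (p : ℚ_[p])) (p ^ k)‖ * ρ ^ (p ^ k)
        = (p : ℝ) ^ (-(1 : ℝ) / ((p : ℝ) - 1)) := by
      intro k
      rw [claim2 (p ^ k), aux_digits_pow_sum, hρ,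
        ← Real.rpow_natCast ((p:ℝ) ^ (-(p : ℝ) / ((p : ℝ) - 1))) (p ^ k),
        ← Real.rpow_mul hp0R.le, ← Real.rpow_add hp0R]
      congr 1
      field_simp
      push_cast
      ring
    have hsub : Filter.Tendsto (fun k : ℕ => ‖pChoose p (1 / (p : ℚ_[p])) (p ^ k)‖ * ρ ^ (p ^ k))
        Filter.atTop (nhds 0) :=
      htend.comp (tendsto_pow_atTop_atTop_of_one_lt hp.out.one_lt)
    have hconst : Filter.Tendsto (fun _ : ℕ => (p : ℝ) ^ (-(1 : ℝ) / ((p : ℝ) - 1)))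
        Filter.atTop (nhds 0) := by
      refine hsub.congr fun k => (hval k)
    have := tendsto_nhds_unique hconst tendsto_const_nhds
    exact absurd this (Real.rpow_pos_of_pos hp0R _).ne
end

section
/- Let p be a prime. There exists a unique formal power series s ∈ ℤ[[x]] with integer coefficients such that the constant coefficient of s equals 1 and s^{p−1}·(s − 1) = x in ℤ[[x]]. Moreover, for this s there are infinitely many n such that p does not divide the n-th coefficient of s. (Consequently, viewed over ℚ_p, the series s has radius of convergence exactly 1, which is strictly smaller than the absolute value p^p of the nonzero finite branch point −(p−1)^{p−1}p^{−p} of the equation y^{p−1}(y−1) = x.) -/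
open PowerSeries Polynomial Finset


private theorem span_pow_mem19 (n : ℕ) (f : PowerSeries ℤ) :
    f ∈ ((Ideal.span {PowerSeries.X} : Ideal (PowerSeries ℤ)) ^ n • ⊤ : Ideal (PowerSeries ℤ)) ↔
      ∀ m < n, PowerSeries.coeff m f = 0 := by
  rw [smul_eq_mul, Ideal.mul_top, Ideal.span_singleton_pow, Ideal.mem_span_singleton]
  exact PowerSeries.X_pow_dvd_iff

instance : IsAdicComplete (Ideal.span {PowerSeries.X} : Ideal (PowerSeries ℤ)) (PowerSeries ℤ) where
  haus' := by
    intro x hx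
    ext n
    have := (span_pow_mem19 (n+1) x).mp (SModEq.zero.mp (hx (n+1)))
    simpa using this n (Nat.lt_succ_self n)
  prec' := by
    intro f hf
    refine ⟨PowerSeries.mk (fun n => PowerSeries.coeff n (f (n+1))), fun n => ?_⟩
    rw [SModEq.sub_mem, span_pow_mem19]
    intro m hm
    have h := (span_pow_mem19 (m+1) _).mp (SModEq.sub_mem.mp (hf (Nat.succ_le_of_lt hm)))
    have := h m (Nat.lt_succ_self m)
    simp only [map_sub] at this ⊢
    rw [PowerSeries.coeff_mk]; omega

private theorem exists_s19 (p : ℕ) (hp : p.Prime) : ∃ s : PowerSeries ℤ,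
    PowerSeries.constantCoeff s = 1 ∧ s ^ (p - 1) * (s - 1) = PowerSeries.X := by
  have hp1 : 1 ≤ p := hp.one_lt.le.trans' (by norm_num)
  set I : Ideal (PowerSeries ℤ) := Ideal.span {PowerSeries.X} with hI
  set f : Polynomial (PowerSeries ℤ) :=
    Polynomial.X ^ (p - 1) * (Polynomial.X - 1) - Polynomial.C PowerSeries.X with hf
  have hfm : f.Monic := by
    have h1 : f = Polynomial.X ^ (p - 1 + 1) - (Polynomial.X ^ (p-1) + Polynomial.C PowerSeries.X) := by
      rw [hf]; ring
    rw [h1]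
    apply Polynomial.monic_X_pow_sub
    have hx : (Polynomial.X ^ (p-1) : Polynomial (PowerSeries ℤ)).degree < ((p-1+1 : ℕ) : WithBot ℕ) := by
      rw [Polynomial.degree_X_pow]; exact_mod_cast Nat.lt_succ_self _
    have hc : (Polynomial.C PowerSeries.X : Polynomial (PowerSeries ℤ)).degree < ((p-1+1:ℕ) : WithBot ℕ) :=
      lt_of_le_of_lt Polynomial.degree_C_le (by exact_mod_cast Nat.succ_pos _)
    exact lt_of_le_of_lt (Polynomial.degree_add_le _ _) (max_lt hx hc)
  have h1 : f.eval 1 ∈ I := by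
    simp only [hf, Polynomial.eval_sub, Polynomial.eval_mul, Polynomial.eval_pow,
      Polynomial.eval_X, Polynomial.eval_one, Polynomial.eval_C, sub_self, mul_zero, one_pow,
      zero_sub]
    exact neg_mem (Ideal.subset_span rfl)
  have h2 : IsUnit (Ideal.Quotient.mk I (f.derivative.eval 1)) := by
    have : f.derivative.eval 1 = 1 := by
      simp [hf, Polynomial.derivative_mul, Polynomial.derivative_X_pow]
    rw [this, map_one]; exact isUnit_one
  obtain ⟨a, ha, ha1⟩ := HenselianRing.is_henselian f hfm 1 h1 h2
  refine ⟨a, ?_, ?_⟩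
  · obtain ⟨c, hc⟩ := Ideal.mem_span_singleton.mp ha1
    have := congrArg (PowerSeries.constantCoeff) hc
    simp only [map_sub, map_mul, PowerSeries.constantCoeff_X, zero_mul, map_one] at this
    linarith [this]
  · have := ha
    simp only [Polynomial.IsRoot, hf, Polynomial.eval_sub, Polynomial.eval_mul,
      Polynomial.eval_pow, Polynomial.eval_X, Polynomial.eval_one, Polynomial.eval_C,
      sub_eq_zero] at this
    exact this


private theorem uniq19 (p : ℕ) (hp : p.Prime) (s t : PowerSeries ℤ)
    (hs : PowerSeries.constantCoeff s = 1 ∧ s ^ (p - 1) * (s - 1) = PowerSeries.X)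
    (ht : PowerSeries.constantCoeff t = 1 ∧ t ^ (p - 1) * (t - 1) = PowerSeries.X) : s = t := by
  have hp1 : 1 ≤ p := hp.one_lt.le.trans' (by norm_num)
  set G : PowerSeries ℤ := (∑ i ∈ range p, s ^ i * t ^ (p - 1 - i))
    - (∑ i ∈ range (p-1), s ^ i * t ^ (p - 1 - 1 - i)) with hG
  have key : G * (s - t) = 0 := by
    rw [hG, sub_mul, geom_sum₂_mul, geom_sum₂_mul]
    have h1 : s ^ p - s ^ (p-1) = PowerSeries.X := by
      have := hs.2
      rwa [mul_sub, mul_one, ← pow_succ, Nat.sub_add_cancel hp1] at this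
    have h2 : t ^ p - t ^ (p-1) = PowerSeries.X := by
      have := ht.2
      rwa [mul_sub, mul_one, ← pow_succ, Nat.sub_add_cancel hp1] at this
    have e1 : s ^ p = PowerSeries.X + s ^ (p-1) := by linear_combination h1
    have e2 : t ^ p = PowerSeries.X + t ^ (p-1) := by linear_combination h2
    rw [e1, e2]; ring
  have hGc : PowerSeries.constantCoeff G = 1 := by
    rw [hG]
    simp only [map_sub, map_sum, map_mul, map_pow, hs.1, ht.1, one_pow, mul_one]
    simp only [Finset.sum_const, Finset.card_range, nsmul_eq_mul, mul_one]
    push_cast [hp1]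
    ring
  have hG0 : G ≠ 0 := fun h => by simp [h] at hGc
  rcases mul_eq_zero.mp key with h | h
  · exact absurd h hG0
  · exact sub_eq_zero.mp h

private theorem inf19 (p : ℕ) (hp : p.Prime) (s : PowerSeries ℤ)
    (hs : PowerSeries.constantCoeff s = 1 ∧ s ^ (p - 1) * (s - 1) = PowerSeries.X) :
    {n : ℕ | ¬ ((p : ℤ) ∣ PowerSeries.coeff n s)}.Infinite := by
  haveI : Fact p.Prime := ⟨hp⟩
  intro hfin
  set φ := PowerSeries.map (Int.castRingHom (ZMod p)) with hφ
  set sb : PowerSeries (ZMod p) := φ s with hsb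
  have heq : sb ^ (p - 1) * (sb - 1) = PowerSeries.X := by
    rw [hsb, hφ, ← PowerSeries.map_X (Int.castRingHom (ZMod p)), ← hs.2]
    simp [map_mul, map_pow, map_sub]
  obtain ⟨N, hN⟩ := hfin.bddAbove
  have hvan : ∀ n, N + 1 ≤ n → PowerSeries.coeff n sb = 0 := by
    intro n hn
    have hnot : n ∉ {n : ℕ | ¬ ((p : ℤ) ∣ PowerSeries.coeff n s)} := by
      intro hmem; exact absurd (hN hmem) (by omega)
    have hdvd : (p : ℤ) ∣ PowerSeries.coeff n s := not_not.mp hnot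
    rw [hsb, hφ, PowerSeries.coeff_map]
    exact_mod_cast (ZMod.intCast_zmod_eq_zero_iff_dvd _ _).mpr hdvd
  set g : Polynomial (ZMod p) := PowerSeries.trunc (N + 1) sb with hg
  have hgc : (g : PowerSeries (ZMod p)) = sb := by
    ext m
    rw [Polynomial.coeff_coe, hg, PowerSeries.coeff_trunc]
    split
    · rfl
    · exact (hvan m (by omega)).symm
  have hpol : g ^ (p - 1) * (g - 1) = Polynomial.X := by
    apply Polynomial.coe_inj.mp
    push_cast [hgc]
    try rw [heq]
    try simp [Polynomial.coe_X]
    try exact heq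
  have hg0 : g.coeff 0 = 1 := by
    rw [hg, PowerSeries.coeff_trunc]
    simp only [Nat.zero_lt_succ, if_true]
    rw [← PowerSeries.coeff_zero_eq_constantCoeff_apply] at hs
    rw [hsb, hφ, PowerSeries.coeff_map, hs.1]; simp
  have hgne : g ≠ 0 := fun h => by simp [h] at hg0
  rcases Nat.eq_zero_or_pos g.natDegree with hd | hd
  · have : g = 1 := by
      rw [Polynomial.eq_C_of_natDegree_eq_zero hd, hg0, map_one]
    rw [this] at hpol
    simp at hpol
    exact Polynomial.X_ne_zero hpol.symm
  · have hsub : (g - 1).natDegree = g.natDegree := by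
      have := Polynomial.natDegree_sub_C (p := g) (a := (1 : ZMod p))
      simpa using this
    have hsne : g - 1 ≠ 0 := by
      intro h; rw [h] at hsub; simp at hsub; omega
    have hdeg := congrArg Polynomial.natDegree hpol
    rw [Polynomial.natDegree_mul (pow_ne_zero _ hgne) hsne, Polynomial.natDegree_pow,
      hsub, Polynomial.natDegree_X] at hdeg
    have h1 : 1 ≤ (p - 1) * g.natDegree := Nat.one_le_iff_ne_zero.mpr
      (Nat.mul_ne_zero (by have := hp.one_lt; omega) (by omega))
    omega

/-- There is a unique `s ∈ ℤ[[x]]` with constant term `1` satisfying `s^{p-1}(s-1) = x`,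
and infinitely many of its coefficients are not divisible by `p`. -/
theorem stmt_19 (p : ℕ) (hp : p.Prime) :
    (∃! s : PowerSeries ℤ,
      PowerSeries.constantCoeff s = 1 ∧ s ^ (p - 1) * (s - 1) = PowerSeries.X) ∧
    ∀ s : PowerSeries ℤ,
      (PowerSeries.constantCoeff s = 1 ∧ s ^ (p - 1) * (s - 1) = PowerSeries.X) →
      {n : ℕ | ¬ ((p : ℤ) ∣ PowerSeries.coeff n s)}.Infinite := by
  obtain ⟨s, hs⟩ := exists_s19 p hp
  exact ⟨⟨s, hs, fun t ht => uniq19 p hp t s ht hs⟩, fun t ht => inf19 p hp t ht⟩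
end
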